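/- For 0 < σ < π and real s > 1, ζ_CB(s; sin(σ/2)) = (1/Γ(s−1)) ∫_0^σ θ·(−2 log(sin(θ/2)/sin(σ/2)))^{s−2} dθ, where ζ_CB(s;z) = Σ_{m=1}^∞ (2z)^{2m}/(binom(2m,m) m^s). -/

import Mathlib

open Real Set MeasureTheory intervalIntegral


lemma prod_ratio (n : ℕ) : ∏ i ∈ Finset.range n, (2 * (i : ℝ) + 2) / (2 * i + 3)
    = 4 ^ n * (n.factorial : ℝ) ^ 2 / ((2 * n + 1).factorial : ℝ) := by
  induction n with
  | zero => simp
  | succ k ih =>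
    rw [Finset.prod_range_succ, ih]
    have e1 : ((k+1).factorial : ℝ) = ((k:ℝ)+1) * (k.factorial : ℝ) := by
      rw [Nat.factorial_succ]; push_cast; ring
    have e2 : ((2*(k+1)+1).factorial : ℝ)
        = (2*(k:ℝ)+3) * (2*(k:ℝ)+2) * ((2*k+1).factorial : ℝ) := by
      have h : 2*(k+1)+1 = ((2*k+1)+1)+1 := by ring
      rw [h, Nat.factorial_succ, Nat.factorial_succ]; push_cast; ring
    rw [e1, e2]
    have hA : ((2*k+1).factorial : ℝ) ≠ 0 := by positivity
    have hB : (2*(k:ℝ)+3) ≠ 0 := by positivity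
    have hC : (2*(k:ℝ)+2) ≠ 0 := by positivity
    field_simp
    ring

lemma wallis_half (n : ℕ) : ∫ φ in (0:ℝ)..(π/2), Real.sin φ ^ (2 * n + 1)
    = 4 ^ n * (n.factorial : ℝ) ^ 2 / ((2 * n + 1).factorial : ℝ) := by
  have hsymm : ∫ φ in (π/2:ℝ)..π, Real.sin φ ^ (2 * n + 1)
      = ∫ φ in (0:ℝ)..(π/2), Real.sin φ ^ (2 * n + 1) := by
    have h := intervalIntegral.integral_comp_sub_left (a := π/2) (b := π)
      (fun x => Real.sin x ^ (2 * n + 1)) π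
    simp only [Real.sin_pi_sub] at h
    rw [h, sub_self, (by ring : π - π/2 = π/2)]
  have hsplit : (∫ φ in (0:ℝ)..π, Real.sin φ ^ (2 * n + 1))
      = (∫ φ in (0:ℝ)..(π/2), Real.sin φ ^ (2 * n + 1))
        + ∫ φ in (π/2:ℝ)..π, Real.sin φ ^ (2 * n + 1) := by
    rw [intervalIntegral.integral_add_adjacent_intervals] <;>
      exact (continuous_sin.pow _).intervalIntegrable _ _
  have := integral_sin_pow_odd (n := n)
  rw [prod_ratio] at this
  rw [hsplit, hsymm] at this
  linarith


lemma binom_fact (m : ℕ) : (((2*(m+1)).choose (m+1) : ℕ) : ℝ)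
    = (2*(m:ℝ)+2) * ((2*m+1).factorial : ℝ) / (((m+1).factorial : ℝ))^2 := by
  have h := Nat.choose_mul_factorial_mul_factorial (show m+1 ≤ 2*(m+1) by omega)
  have h2 : 2*(m+1) - (m+1) = m+1 := by omega
  rw [h2] at h
  have hcast : (((2*(m+1)).choose (m+1) : ℕ) : ℝ) * ((m+1).factorial : ℝ)
      * ((m+1).factorial : ℝ) = ((2*(m+1)).factorial : ℝ) := by exact_mod_cast congrArg Nat.cast h
  have e : ((2*(m+1)).factorial : ℝ) = (2*(m:ℝ)+2) * ((2*m+1).factorial : ℝ) := by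
    have h3 : 2*(m+1) = (2*m+1)+1 := by ring
    rw [h3, Nat.factorial_succ]; push_cast; ring
  have hf : ((m+1).factorial : ℝ) ≠ 0 := by positivity
  field_simp at hcast ⊢
  rw [hcast, e]; ring

-- term rewrite: (2x)^(2(m+1)) / (C * (m+1)) = 2 * x^(2m+2) * (4^m (m!)^2/(2m+1)!)
lemma term_eq_wallis (m : ℕ) (x : ℝ) :
    (2*x) ^ (2*(m+1)) / (((2*(m+1)).choose (m+1) : ℝ) * ((m:ℝ)+1))
      = 2 * x ^ (2*m+2) * (4 ^ m * (m.factorial : ℝ) ^ 2 / ((2*m+1).factorial : ℝ)) := by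
  rw [binom_fact]
  have hf : ((m+1).factorial : ℝ) ≠ 0 := by positivity
  have hf2 : ((2*m+1).factorial : ℝ) ≠ 0 := by positivity
  have e1 : ((m+1).factorial : ℝ) = ((m:ℝ)+1) * (m.factorial : ℝ) := by
    rw [Nat.factorial_succ]; push_cast; ring
  have hm : ((m:ℝ)+1) ≠ 0 := by positivity
  have hmf : (m.factorial : ℝ) ≠ 0 := by positivity
  rw [e1, mul_pow (2:ℝ) x]
  have e2 : (2:ℝ) ^ (2*(m+1)) = 4 * 4 ^ m := by
    rw [pow_mul]; norm_num; ring
  rw [e2]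
  have e3 : x ^ (2*(m+1)) = x ^ (2*m+2) := by ring_nf
  rw [e3]
  field_simp
  ring


lemma int_sin_div {x : ℝ} (hx0 : 0 < x) (hx1 : x < 1) :
    ∫ φ in (0:ℝ)..(π/2), Real.sin φ / (1 - x^2 * Real.sin φ^2)
      = arcsin x / (x * Real.sqrt (1 - x^2)) := by
  set c := Real.sqrt (1 - x^2) with hc
  have hx2 : 0 < 1 - x^2 := by nlinarith
  have hcpos : 0 < c := Real.sqrt_pos.mpr hx2
  have hcsq : c^2 = 1 - x^2 := Real.sq_sqrt hx2.le
  have hden : ∀ φ : ℝ, 0 < 1 - x^2 * Real.sin φ^2 := by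
    intro φ
    nlinarith [Real.sin_sq_le_one φ, sq_nonneg (Real.sin φ), sq_nonneg x]
  have hderiv : ∀ φ ∈ Set.uIcc (0:ℝ) (π/2),
      HasDerivAt (fun φ => -(1/(x*c)) * arctan (x * Real.cos φ / c))
        (Real.sin φ / (1 - x^2 * Real.sin φ^2)) φ := by
    intro φ _
    have h1 : HasDerivAt (fun φ => x * Real.cos φ / c) (x * (-Real.sin φ) / c) φ :=
      ((Real.hasDerivAt_cos φ).const_mul x).div_const c
    have h2 := (Real.hasDerivAt_arctan (x * Real.cos φ / c)).comp φ h1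
    have h3 := h2.const_mul (-(1/(x*c)))
    refine h3.congr_deriv ?_
    symm
    have hd := hden φ
    have hs : Real.cos φ ^ 2 = 1 - Real.sin φ ^ 2 := Real.cos_sq' φ
    field_simp
    rw [div_eq_iff (by nlinarith [hd])]
    linear_combination Real.sin φ * hcsq + (Real.sin φ * x^2) * hs
  have hcont : Continuous fun φ => Real.sin φ / (1 - x^2 * Real.sin φ^2) :=
    Continuous.div continuous_sin (by continuity) (fun φ => ne_of_gt (hden φ))
  rw [intervalIntegral.integral_eq_sub_of_hasDerivAt hderiv
    (hcont.intervalIntegrable _ _)]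
  rw [Real.cos_pi_div_two, Real.cos_zero]
  rw [arcsin_eq_arctan ⟨by linarith, hx1⟩]
  simp only [mul_zero, zero_div, arctan_zero, mul_one]
  field_simp
  rw [← hc]; ring


lemma series_arcsin {x : ℝ} (hx0 : 0 < x) (hx1 : x < 1) :
    ∑' m : ℕ, (2*x) ^ (2*(m+1)) / (((2*(m+1)).choose (m+1) : ℝ) * ((m:ℝ)+1))
      = 2 * x * arcsin x / Real.sqrt (1 - x^2) := by
  have hπ2 : (0:ℝ) ≤ π/2 := by positivity
  set μ := volume.restrict (Set.Ioc (0:ℝ) (π/2)) with hμ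
  set g : ℕ → ℝ → ℝ := fun m φ => 2 * x^(2*m+2) * Real.sin φ^(2*m+1) with hg
  have hint : ∀ m, Integrable (g m) μ := by
    intro m
    exact (Continuous.integrableOn_Ioc (by fun_prop)).integrable
  have hval : ∀ m, ∫ φ, g m φ ∂μ
      = 2 * x^(2*m+2) * (4 ^ m * (m.factorial : ℝ) ^ 2 / ((2*m+1).factorial : ℝ)) := by
    intro m
    have : ∫ φ, g m φ ∂μ = ∫ φ in (0:ℝ)..(π/2), g m φ := by
      rw [intervalIntegral.integral_of_le hπ2]
    rw [this, hg]
    simp only []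
    rw [intervalIntegral.integral_const_mul, wallis_half]
  have hx2 : x^2 < 1 := by nlinarith
  have hbsum : Summable fun m : ℕ => (2 * x^(2*m+2)) * (π/2) := by
    apply Summable.mul_right
    apply Summable.mul_left
    have h4 : Summable fun m : ℕ => (x^2)^(m+1) := by
      apply ((summable_geometric_of_lt_one (by positivity) hx2).mul_left (x^2)).congr
      intro m; rw [← pow_succ']
    apply h4.congr
    intro m
    rw [← pow_mul]
    ring_nf
  have hsummable : Summable fun m => ∫ φ, ‖g m φ‖ ∂μ := by
    apply Summable.of_nonneg_of_le (fun m => integral_nonneg (fun φ => norm_nonneg _))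
      (fun m => ?_) hbsum
    have hb : ∀ φ, ‖g m φ‖ ≤ 2 * x^(2*m+2) := by
      intro φ
      rw [hg]
      simp only [norm_mul, norm_pow, Real.norm_eq_abs]
      have h1 : |Real.sin φ| ^ (2*m+1) ≤ 1 :=
        pow_le_one₀ (abs_nonneg _) (Real.abs_sin_le_one φ)
      have h2 : |x| = x := abs_of_pos hx0
      have h3 : |(2:ℝ)| = 2 := by norm_num
      rw [h2, h3]
      nlinarith [pow_nonneg hx0.le (2*m+2), abs_nonneg (Real.sin φ),
        pow_nonneg (abs_nonneg (Real.sin φ)) (2*m+1)]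
    calc ∫ φ, ‖g m φ‖ ∂μ ≤ ∫ _, 2 * x^(2*m+2) ∂μ :=
          integral_mono (hint m).norm (integrable_const _) hb
      _ = (2 * x^(2*m+2)) * (π/2) := by
          rw [MeasureTheory.integral_const]
          simp [hμ, Real.volume_Ioc, ENNReal.toReal_ofReal hπ2, smul_eq_mul, mul_comm]
          rw [max_eq_left hπ2]; ring
  have hswap := integral_tsum_of_summable_integral_norm hint hsummable
  have hpt : ∀ φ : ℝ, ∑' m, g m φ = 2 * x^2 * Real.sin φ / (1 - x^2 * Real.sin φ^2) := by
    intro φ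
    have hr0 : (0:ℝ) ≤ x^2 * Real.sin φ^2 := by positivity
    have hr1 : x^2 * Real.sin φ^2 < 1 := by
      nlinarith [Real.sin_sq_le_one φ, sq_nonneg (Real.sin φ)]
    have hgeo := tsum_geometric_of_lt_one hr0 hr1
    have : ∀ m : ℕ, g m φ = (2 * x^2 * Real.sin φ) * (x^2 * Real.sin φ^2)^m := by
      intro m
      rw [hg]
      simp only []
      rw [mul_pow, ← pow_mul, ← pow_mul]
      ring
    rw [tsum_congr this, tsum_mul_left, hgeo]
    field_simp
  have step1 : ∑' m : ℕ, (2*x) ^ (2*(m+1)) / (((2*(m+1)).choose (m+1) : ℝ) * ((m:ℝ)+1))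
      = ∑' m, ∫ φ, g m φ ∂μ := by
    apply tsum_congr; intro m; rw [term_eq_wallis, hval]
  have step3 : ∫ φ, (∑' m, g m φ) ∂μ
      = ∫ φ, 2 * x^2 * Real.sin φ / (1 - x^2 * Real.sin φ^2) ∂μ := by
    apply MeasureTheory.integral_congr_ae; filter_upwards with φ; rw [hpt]
  have step4 : ∫ φ, 2 * x^2 * Real.sin φ / (1 - x^2 * Real.sin φ^2) ∂μ
      = 2 * x * arcsin x / Real.sqrt (1 - x^2) := by
    have h5 : ∫ φ, 2 * x^2 * Real.sin φ / (1 - x^2 * Real.sin φ^2) ∂μ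
        = ∫ φ in (0:ℝ)..(π/2), 2 * x^2 * (Real.sin φ / (1 - x^2 * Real.sin φ^2)) := by
      rw [intervalIntegral.integral_of_le hπ2]
      apply MeasureTheory.integral_congr_ae; filter_upwards with φ; ring
    rw [h5, intervalIntegral.integral_const_mul, int_sin_div hx0 hx1]
    have hc : 0 < Real.sqrt (1 - x^2) := Real.sqrt_pos.mpr (by nlinarith)
    field_simp
  rw [step1, hswap, step3, step4]


section Subst
variable {σ s : ℝ} (hσ0 : 0 < σ) (hσπ : σ < π) (hs : 1 < s)

-- abbreviations
local notation "X" => Real.sin (σ/2)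

lemma sin_half_pos (hσ0 : 0 < σ) (hσπ : σ < π) {θ : ℝ} (h1 : 0 < θ) (h2 : θ ≤ σ) :
    0 < Real.sin (θ/2) :=
  Real.sin_pos_of_pos_of_lt_pi (by linarith) (by linarith)

lemma cos_half_pos (hσπ : σ < π) {θ : ℝ} (h1 : 0 < θ) (h2 : θ ≤ σ) :
    0 < Real.cos (θ/2) :=
  Real.cos_pos_of_mem_Ioo ⟨by linarith [Real.pi_pos], by linarith⟩

-- the substitution map
noncomputable def tmap (σ : ℝ) (θ : ℝ) : ℝ := -2 * Real.log (Real.sin (θ/2) / Real.sin (σ/2))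

lemma tmap_pos (hσ0 : 0 < σ) (hσπ : σ < π) {θ : ℝ} (hθ : θ ∈ Ioo 0 σ) : 0 < tmap σ θ := by
  obtain ⟨h1, h2⟩ := hθ
  have hX : 0 < X := sin_half_pos hσ0 hσπ hσ0 le_rfl
  have hθs : 0 < Real.sin (θ/2) := sin_half_pos hσ0 hσπ h1 h2.le
  have hlt : Real.sin (θ/2) < X := by
    apply Real.strictMonoOn_sin ⟨by linarith [Real.pi_pos], by linarith⟩
      ⟨by linarith [Real.pi_pos], by linarith⟩ (by linarith)
  have : Real.sin (θ/2) / X < 1 := (div_lt_one hX).mpr hlt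
  have hlog : Real.log (Real.sin (θ/2) / X) < 0 :=
    Real.log_neg (by positivity) this
  unfold tmap; nlinarith

lemma tmap_hasDeriv (hσ0 : 0 < σ) (hσπ : σ < π) {θ : ℝ} (hθ : θ ∈ Ioo 0 σ) :
    HasDerivAt (tmap σ) (-(Real.cos (θ/2) / Real.sin (θ/2))) θ := by
  obtain ⟨h1, h2⟩ := hθ
  have hθs : 0 < Real.sin (θ/2) := sin_half_pos hσ0 hσπ h1 h2.le
  have hX : 0 < X := sin_half_pos hσ0 hσπ hσ0 le_rfl
  have hhalf : HasDerivAt (fun θ : ℝ => θ/2) (1/2) θ := by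
    simpa using (hasDerivAt_id θ).div_const 2
  have hsin : HasDerivAt (fun θ : ℝ => Real.sin (θ/2)) (Real.cos (θ/2) * (1/2)) θ :=
    hhalf.sin
  have hdiv : HasDerivAt (fun θ : ℝ => Real.sin (θ/2) / X)
      (Real.cos (θ/2) * (1/2) / X) θ := hsin.div_const X
  have hlog : HasDerivAt (fun θ : ℝ => Real.log (Real.sin (θ/2) / X))
      ((Real.sin (θ/2) / X)⁻¹ * (Real.cos (θ/2) * (1/2) / X)) θ :=
    (Real.hasDerivAt_log (by positivity)).comp θ hdiv
  have := hlog.const_mul (-2 : ℝ)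
  refine this.congr_deriv ?_
  symm
  field_simp

lemma tmap_injOn (hσ0 : 0 < σ) (hσπ : σ < π) : InjOn (tmap σ) (Ioo 0 σ) := by
  have : StrictAntiOn (tmap σ) (Ioo 0 σ) := by
    intro a ha b hb hab
    have hsa : 0 < Real.sin (a/2) := sin_half_pos hσ0 hσπ ha.1 ha.2.le
    have hX : 0 < X := sin_half_pos hσ0 hσπ hσ0 le_rfl
    have hlt : Real.sin (a/2) < Real.sin (b/2) :=
      Real.strictMonoOn_sin ⟨by linarith [Real.pi_pos, ha.1], by linarith [ha.2, hb.2]⟩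
        ⟨by linarith [Real.pi_pos, hb.1], by linarith [hb.2]⟩ (by linarith)
    have hdiv : Real.sin (a/2) / X < Real.sin (b/2) / X := by gcongr
    have := Real.log_lt_log (by positivity) hdiv
    unfold tmap; nlinarith
  exact this.injOn

lemma tmap_image (hσ0 : 0 < σ) (hσπ : σ < π) : tmap σ '' (Ioo 0 σ) = Ioi 0 := by
  have hX : 0 < X := sin_half_pos hσ0 hσπ hσ0 le_rfl
  have hX1 : X ≤ 1 := Real.sin_le_one _
  apply Subset.antisymm
  · rintro u ⟨θ, hθ, rfl⟩
    exact tmap_pos hσ0 hσπ hθ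
  · intro u hu
    have hu0 : (0:ℝ) < u := hu
    set y := X * Real.exp (-u/2) with hy
    have hy0 : 0 < y := by positivity
    have hyX : y < X := by
      have : Real.exp (-u/2) < 1 := Real.exp_lt_one_iff.mpr (by linarith)
      nlinarith
    have hy1 : y ≤ 1 := by nlinarith [Real.exp_pos (-u/2)]
    refine ⟨2 * Real.arcsin y, ⟨?_, ?_⟩, ?_⟩
    · have := Real.arcsin_pos.mpr hy0
      linarith
    · have harc : Real.arcsin y < Real.arcsin X := by
        apply Real.strictMonoOn_arcsin ⟨by linarith, hy1⟩ ⟨by linarith, hX1⟩ hyX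
      have : Real.arcsin X = σ/2 :=
        Real.arcsin_sin (by linarith [Real.pi_pos]) (by linarith)
      linarith [harc, this.symm.le]
    · unfold tmap
      rw [(by ring : 2 * Real.arcsin y / 2 = Real.arcsin y),
        Real.sin_arcsin (by linarith) hy1, hy]
      rw [show X * Real.exp (-u/2) / X = Real.exp (-u/2) by
        rw [mul_comm, mul_div_assoc, div_self (ne_of_gt hX), mul_one]]
      rw [Real.log_exp]
      ring

end Subst

section SubstInt
variable {σ s : ℝ}

noncomputable def gfun (s : ℝ) (m : ℕ) (u : ℝ) : ℝ :=
  u ^ (s-2) * Real.exp (-(((m:ℝ)+1) * u))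

lemma gfun_integrableOn (hs : 1 < s) (m : ℕ) : IntegrableOn (gfun s m) (Ioi 0) := by
  have h1 : 0 < s - 1 := by linarith
  have hbd := Real.GammaIntegral_convergent h1
  apply Integrable.mono' hbd
  · apply ContinuousOn.aestronglyMeasurable ?_ measurableSet_Ioi
    apply ContinuousOn.mul
    · exact fun u hu => (Real.continuousAt_rpow_const u (s-2) (Or.inl (ne_of_gt hu))).continuousWithinAt
    · fun_prop
  · filter_upwards [ae_restrict_mem measurableSet_Ioi] with u hu
    have hu0 : (0:ℝ) < u := hu
    rw [gfun, Real.norm_eq_abs,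
      abs_of_nonneg (mul_nonneg (Real.rpow_nonneg hu0.le _) (Real.exp_pos _).le)]
    have : Real.exp (-(((m:ℝ)+1) * u)) ≤ Real.exp (-u) := by
      apply Real.exp_le_exp.mpr
      nlinarith [Nat.cast_nonneg (α := ℝ) m]
    have h2 : (s - 1) - 1 = s - 2 := by ring
    rw [h2]
    calc u ^ (s-2) * Real.exp (-(((m:ℝ)+1) * u)) ≤ u ^ (s-2) * Real.exp (-u) := by
          apply mul_le_mul_of_nonneg_left this (by positivity)
      _ = Real.exp (-u) * u ^ (s-2) := by ring

lemma gfun_integral (hs : 1 < s) (m : ℕ) :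
    ∫ u in Ioi (0:ℝ), gfun s m u = Real.Gamma (s-1) / ((m:ℝ)+1) ^ (s-1) := by
  have h1 : 0 < s - 1 := by linarith
  have hr : (0:ℝ) < (m:ℝ)+1 := by positivity
  have := Real.integral_rpow_mul_exp_neg_mul_Ioi h1 hr
  have h2 : (s - 1) - 1 = s - 2 := by ring
  rw [h2] at this
  unfold gfun
  rw [this, Real.div_rpow (by norm_num) hr.le, Real.one_rpow]
  ring

end SubstInt

section Key
variable {σ s : ℝ}

noncomputable def Ffun (σ s : ℝ) (m : ℕ) (θ : ℝ) : ℝ :=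
  (Real.cos (θ/2) / Real.sin (θ/2)) *
    ((Real.sin (θ/2) / Real.sin (σ/2)) ^ (2*(m+1)) * (tmap σ θ) ^ (s-2))

lemma core_eq (hσ0 : 0 < σ) (hσπ : σ < π) (m : ℕ) :
    EqOn (fun θ => |(-(Real.cos (θ/2) / Real.sin (θ/2)))| • gfun s m (tmap σ θ))
      (Ffun σ s m) (Ioo 0 σ) := by
  intro θ hθ
  have hθs : 0 < Real.sin (θ/2) := sin_half_pos hσ0 hσπ hθ.1 hθ.2.le
  have hθc : 0 < Real.cos (θ/2) := cos_half_pos hσπ hθ.1 hθ.2.le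
  have hX : 0 < Real.sin (σ/2) := sin_half_pos hσ0 hσπ hσ0 le_rfl
  have habs : |(-(Real.cos (θ/2) / Real.sin (θ/2)))| = Real.cos (θ/2) / Real.sin (θ/2) := by
    rw [abs_neg, abs_of_pos (by positivity)]
  have hexp : Real.exp (-(((m:ℝ)+1) * tmap σ θ))
      = (Real.sin (θ/2) / Real.sin (σ/2)) ^ (2*(m+1)) := by
    have h1 : -(((m:ℝ)+1) * tmap σ θ)
        = ((2*(m+1) : ℕ) : ℝ) * Real.log (Real.sin (θ/2) / Real.sin (σ/2)) := by
      unfold tmap; push_cast; ring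
    rw [h1, Real.exp_nat_mul, Real.exp_log (by positivity)]
  simp only [Ffun, gfun, smul_eq_mul, habs, hexp]
  ring

lemma Ffun_integral (hσ0 : 0 < σ) (hσπ : σ < π) (hs : 1 < s) (m : ℕ) :
    ∫ θ in Ioo 0 σ, Ffun σ s m θ = Real.Gamma (s-1) / ((m:ℝ)+1) ^ (s-1) := by
  have hderiv : ∀ θ ∈ Ioo 0 σ, HasDerivWithinAt (tmap σ)
      (-(Real.cos (θ/2) / Real.sin (θ/2))) (Ioo 0 σ) θ :=
    fun θ hθ => (tmap_hasDeriv hσ0 hσπ hθ).hasDerivWithinAt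
  have key := integral_image_eq_integral_abs_deriv_smul measurableSet_Ioo hderiv
    (tmap_injOn hσ0 hσπ) (gfun s m)
  rw [tmap_image hσ0 hσπ] at key
  rw [← setIntegral_congr_fun measurableSet_Ioo (core_eq hσ0 hσπ m), ← key,
    gfun_integral hs m]

lemma Ffun_integrableOn (hσ0 : 0 < σ) (hσπ : σ < π) (hs : 1 < s) (m : ℕ) :
    IntegrableOn (Ffun σ s m) (Ioo 0 σ) := by
  have hderiv : ∀ θ ∈ Ioo 0 σ, HasDerivWithinAt (tmap σ)
      (-(Real.cos (θ/2) / Real.sin (θ/2))) (Ioo 0 σ) θ :=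
    fun θ hθ => (tmap_hasDeriv hσ0 hσπ hθ).hasDerivWithinAt
  have h1 := (integrableOn_image_iff_integrableOn_abs_deriv_smul measurableSet_Ioo hderiv
    (tmap_injOn hσ0 hσπ) (gfun s m)).mp (by rw [tmap_image hσ0 hσπ]; exact gfun_integrableOn hs m)
  exact h1.congr_fun (core_eq hσ0 hσπ m) measurableSet_Ioo

end Key


lemma wallis_le (m : ℕ) : 4 ^ m * (m.factorial : ℝ) ^ 2 / ((2*m+1).factorial : ℝ) ≤ π/2 := by
  rw [← wallis_half]
  have hπ2 : (0:ℝ) ≤ π/2 := by positivity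
  calc ∫ φ in (0:ℝ)..(π/2), Real.sin φ ^ (2*m+1)
      ≤ ∫ _ in (0:ℝ)..(π/2), (1:ℝ) := by
        apply intervalIntegral.integral_mono_on hπ2
          ((continuous_sin.pow _).intervalIntegrable _ _)
          (intervalIntegrable_const)
        intro φ hφ
        apply pow_le_one₀ (Real.sin_nonneg_of_nonneg_of_le_pi hφ.1 (by linarith [hφ.2, Real.pi_pos])) (Real.sin_le_one φ)
    _ = π/2 := by simp

lemma wallis_nonneg (m : ℕ) : 0 ≤ 4 ^ m * (m.factorial : ℝ) ^ 2 / ((2*m+1).factorial : ℝ) := by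
  positivity

lemma pointwise_eq {σ s : ℝ} (hσ0 : 0 < σ) (hσπ : σ < π) {θ : ℝ} (hθ : θ ∈ Ioo 0 σ) :
    ∑' m : ℕ, (2*Real.sin (σ/2)) ^ (2*(m+1)) /
        (((2*(m+1)).choose (m+1) : ℝ) * ((m:ℝ)+1)) * Ffun σ s m θ
      = θ * (tmap σ θ) ^ (s-2) := by
  set x := Real.sin (θ/2) with hxdef
  have hx0 : 0 < x := sin_half_pos hσ0 hσπ hθ.1 hθ.2.le
  have hx1 : x < 1 := by
    have h1 : x < Real.sin (π/2) := by
      apply Real.strictMonoOn_sin ⟨by linarith [Real.pi_pos, hθ.1], by linarith [hθ.2]⟩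
        ⟨by linarith [Real.pi_pos], le_rfl⟩ (by linarith [hθ.2])
    rwa [Real.sin_pi_div_two] at h1
  have hc : 0 < Real.cos (θ/2) := cos_half_pos hσπ hθ.1 hθ.2.le
  have hX : 0 < Real.sin (σ/2) := sin_half_pos hσ0 hσπ hσ0 le_rfl
  have harc : arcsin x = θ/2 :=
    Real.arcsin_sin (by linarith [Real.pi_pos, hθ.1]) (by linarith [hθ.2])
  have hsq : Real.sqrt (1 - x^2) = Real.cos (θ/2) := by
    rw [show (1:ℝ) - x^2 = Real.cos (θ/2)^2 by rw [hxdef]; nlinarith [Real.sin_sq_add_cos_sq (θ/2)]]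
    exact Real.sqrt_sq hc.le
  have hS := series_arcsin hx0 hx1
  rw [harc, hsq] at hS
  have hterm : ∀ m : ℕ, (2*Real.sin (σ/2)) ^ (2*(m+1)) /
      (((2*(m+1)).choose (m+1) : ℝ) * ((m:ℝ)+1)) * Ffun σ s m θ
      = ((2*x) ^ (2*(m+1)) / (((2*(m+1)).choose (m+1) : ℝ) * ((m:ℝ)+1)))
        * ((Real.cos (θ/2) / x) * (tmap σ θ) ^ (s-2)) := by
    intro m
    have hpow : (2*Real.sin (σ/2)) ^ (2*(m+1)) * (x / Real.sin (σ/2)) ^ (2*(m+1))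
        = (2*x) ^ (2*(m+1)) := by
      rw [← mul_pow]
      congr 1
      field_simp
    unfold Ffun
    rw [← hxdef, ← hpow]
    ring
  rw [tsum_congr hterm, tsum_mul_right, hS]
  field_simp

open Real in
theorem zetaCB_log_sine_integral (σ s : ℝ) (hσ0 : 0 < σ) (hσπ : σ < π) (hs : 1 < s) :
    ∑' m : ℕ, (2 * Real.sin (σ / 2)) ^ (2 * (m + 1)) /
        ((Nat.choose (2 * (m + 1)) (m + 1) : ℝ) * ((m : ℝ) + 1) ^ s) =
      (1 / Real.Gamma (s - 1)) *
        ∫ θ in (0 : ℝ)..σ,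
          θ * (-2 * Real.log (Real.sin (θ / 2) / Real.sin (σ / 2))) ^ (s - 2) := by
  have hX : 0 < Real.sin (σ/2) := sin_half_pos hσ0 hσπ hσ0 le_rfl
  have hX1 : Real.sin (σ/2) < 1 := by
    have h1 : Real.sin (σ/2) < Real.sin (π/2) := by
      apply Real.strictMonoOn_sin ⟨by linarith [Real.pi_pos], by linarith⟩
        ⟨by linarith [Real.pi_pos], le_rfl⟩ (by linarith)
    rwa [Real.sin_pi_div_two] at h1
  have hΓ : 0 < Real.Gamma (s-1) := Real.Gamma_pos_of_pos (by linarith)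
  have hchoose : ∀ m : ℕ, (0:ℝ) < ((2*(m+1)).choose (m+1) : ℝ) := by
    intro m
    exact_mod_cast Nat.choose_pos (by omega)
  set μ := volume.restrict (Ioo (0:ℝ) σ) with hμ
  set F : ℕ → ℝ → ℝ := fun m θ =>
    (2*Real.sin (σ/2)) ^ (2*(m+1)) / (((2*(m+1)).choose (m+1) : ℝ) * ((m:ℝ)+1))
      * Ffun σ s m θ with hF
  set c : ℕ → ℝ := fun m =>
    (2*Real.sin (σ/2)) ^ (2*(m+1)) / (((2*(m+1)).choose (m+1) : ℝ) * ((m:ℝ)+1)) with hc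
  have hcpos : ∀ m, 0 ≤ c m := by
    intro m
    apply div_nonneg (by positivity)
    have := hchoose m
    positivity
  have hcle : ∀ m, c m ≤ π * Real.sin (σ/2) ^ (2*m+2) := by
    intro m
    rw [hc]
    simp only []
    rw [term_eq_wallis]
    have h1 := wallis_le m
    have h2 : (0:ℝ) ≤ Real.sin (σ/2) ^ (2*m+2) := by positivity
    nlinarith [wallis_nonneg m]
  have hFint : ∀ m, Integrable (F m) μ := fun m =>
    ((Ffun_integrableOn hσ0 hσπ hs m).const_mul _)
  have hFval : ∀ m, ∫ θ, F m θ ∂μ = c m * (Real.Gamma (s-1) / ((m:ℝ)+1) ^ (s-1)) := by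
    intro m
    rw [hF]
    simp only []
    rw [MeasureTheory.integral_const_mul]
    rw [hμ]
    rw [Ffun_integral hσ0 hσπ hs m]
  have hFnn : ∀ m, ∀ θ ∈ Ioo (0:ℝ) σ, 0 ≤ F m θ := by
    intro m θ hθ
    have h1 : 0 ≤ Ffun σ s m θ := by
      unfold Ffun
      have hθs : 0 < Real.sin (θ/2) := sin_half_pos hσ0 hσπ hθ.1 hθ.2.le
      have hθc : 0 < Real.cos (θ/2) := cos_half_pos hσπ hθ.1 hθ.2.le
      have ht : 0 < tmap σ θ := tmap_pos hσ0 hσπ hθ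
      apply mul_nonneg (by positivity)
      apply mul_nonneg (by positivity) (Real.rpow_nonneg ht.le _)
    exact mul_nonneg (hcpos m) h1
  have hnorm : ∀ m, ∫ θ, ‖F m θ‖ ∂μ = c m * (Real.Gamma (s-1) / ((m:ℝ)+1) ^ (s-1)) := by
    intro m
    rw [← hFval m, hμ]
    apply MeasureTheory.setIntegral_congr_fun measurableSet_Ioo
    intro θ hθ
    exact norm_of_nonneg (hFnn m θ hθ)
  have hbsum2 : Summable fun m : ℕ => (π * Real.sin (σ/2) ^ (2*m+2)) * Real.Gamma (s-1) := by
    apply Summable.mul_right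
    apply Summable.mul_left
    have hx2 : Real.sin (σ/2) ^ 2 < 1 := by nlinarith
    have h4 : Summable fun m : ℕ => (Real.sin (σ/2) ^ 2) ^ (m+1) := by
      apply ((summable_geometric_of_lt_one (by positivity) hx2).mul_left
        (Real.sin (σ/2) ^ 2)).congr
      intro m; rw [← pow_succ']
    apply h4.congr
    intro m
    rw [← pow_mul]
    ring_nf
  have hsum : Summable fun m => ∫ θ, ‖F m θ‖ ∂μ := by
    apply Summable.of_nonneg_of_le
      (fun m => integral_nonneg (fun θ => norm_nonneg _)) (fun m => ?_) hbsum2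
    rw [hnorm m]
    have h1 : Real.Gamma (s-1) / ((m:ℝ)+1) ^ (s-1) ≤ Real.Gamma (s-1) := by
      apply div_le_self hΓ.le
      exact Real.one_le_rpow (by exact_mod_cast Nat.succ_le_succ (Nat.zero_le m)) (by linarith)
    have h2 : 0 ≤ Real.Gamma (s-1) / ((m:ℝ)+1) ^ (s-1) := by
      apply div_nonneg hΓ.le (Real.rpow_nonneg (by positivity) _)
    calc c m * (Real.Gamma (s-1) / ((m:ℝ)+1) ^ (s-1))
        ≤ (π * Real.sin (σ/2) ^ (2*m+2)) * (Real.Gamma (s-1) / ((m:ℝ)+1) ^ (s-1)) :=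
          mul_le_mul_of_nonneg_right (hcle m) h2
      _ ≤ (π * Real.sin (σ/2) ^ (2*m+2)) * Real.Gamma (s-1) :=
          mul_le_mul_of_nonneg_left h1 (by positivity)
  have hswap := integral_tsum_of_summable_integral_norm hFint hsum
  have hps : ∫ θ, (∑' m, F m θ) ∂μ = ∫ θ in Ioo (0:ℝ) σ, θ * tmap σ θ ^ (s-2) := by
    rw [hμ]
    apply MeasureTheory.setIntegral_congr_fun measurableSet_Ioo
    intro θ hθ
    exact pointwise_eq hσ0 hσπ hθ
  have hterm2 : ∀ m : ℕ, ∫ θ, F m θ ∂μ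
      = Real.Gamma (s-1) * ((2*Real.sin (σ/2)) ^ (2*(m+1))
          / (((2*(m+1)).choose (m+1) : ℝ) * ((m:ℝ)+1) ^ s)) := by
    intro m
    rw [hFval m, hc]
    simp only []
    have hm1 : (0:ℝ) < (m:ℝ)+1 := by positivity
    have hr : ((m:ℝ)+1) ^ s = ((m:ℝ)+1) * ((m:ℝ)+1) ^ (s-1) := by
      have h := Real.rpow_add hm1 1 (s-1)
      rw [Real.rpow_one, show (1:ℝ)+(s-1)=s by ring] at h
      exact h
    rw [hr]
    have h3 : ((m:ℝ)+1) ^ (s-1) ≠ 0 := ne_of_gt (Real.rpow_pos_of_pos hm1 _)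
    have h4 := ne_of_gt (hchoose m)
    field_simp
  have hchain : (∫ θ in (0:ℝ)..σ, θ * tmap σ θ ^ (s-2))
      = Real.Gamma (s-1) * ∑' m : ℕ, (2 * Real.sin (σ / 2)) ^ (2 * (m + 1)) /
          ((Nat.choose (2 * (m + 1)) (m + 1) : ℝ) * ((m : ℝ) + 1) ^ s) := by
    rw [intervalIntegral.integral_of_le hσ0.le, MeasureTheory.integral_Ioc_eq_integral_Ioo]
    rw [← hps, ← hswap, tsum_congr hterm2, tsum_mul_left]
  have hgoal : (∫ θ in (0:ℝ)..σ,
      θ * (-2 * Real.log (Real.sin (θ / 2) / Real.sin (σ / 2))) ^ (s - 2))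
      = Real.Gamma (s-1) * ∑' m : ℕ, (2 * Real.sin (σ / 2)) ^ (2 * (m + 1)) /
          ((Nat.choose (2 * (m + 1)) (m + 1) : ℝ) * ((m : ℝ) + 1) ^ s) := hchain
  rw [hgoal, ← mul_assoc, one_div, inv_mul_cancel₀ (ne_of_gt hΓ), one_mul]
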